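/- For every real number a ≥ 2 and every integer m ≥ 2, one has a^(m(m+1)/2) · (1 - a⁻¹ - a⁻²) ≤ ∏_{i=1}^m (a^i - (-1)^i) ≤ a^(m(m+1)/2) · (1 - a⁻¹ - a⁻²)⁻¹. -/
import Mathlib

open Finset

private lemma auxEven (x : ℝ) (hx0 : 0 ≤ x) (hx : x ≤ 1/2) :
    ∀ k : ℕ, (1 - x - x^2) ≤ ∏ i ∈ Icc 1 (2*k+2), (1 - (-x)^i) ∧
      (∏ i ∈ Icc 1 (2*k+2), (1 - (-x)^i)) * (1 - x - x^2) ≤ 1 - x^(2*k+3) := by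
  intro k
  induction k with
  | zero =>
      have h2 : ∏ i ∈ Icc 1 2, (1 - (-x)^i) = (1 + x) * (1 - x^2) := by
        rw [show (2:ℕ) = 1 + 1 from rfl, Finset.prod_Icc_succ_top (by norm_num),
          Finset.Icc_self, Finset.prod_singleton]
        ring
      simp only [Nat.mul_zero, Nat.zero_add] at *
      rw [h2]
      constructor <;> nlinarith [sq_nonneg x, pow_nonneg hx0 3]
  | succ k ih =>
      obtain ⟨h1, h2⟩ := ih
      have key : ∏ i ∈ Icc 1 (2*(k+1)+2), (1 - (-x)^i)
          = (∏ i ∈ Icc 1 (2*k+2), (1 - (-x)^i)) * (1 + x^(2*k+3)) * (1 - x^(2*k+4)) := by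
        rw [show 2*(k+1)+2 = (2*k+3)+1 by ring, Finset.prod_Icc_succ_top (by omega),
          show 2*k+3 = (2*k+2)+1 by ring, Finset.prod_Icc_succ_top (by omega)]
        rw [show (2*k+2)+1+1 = 2*k+4 by ring, show (2*k+2)+1 = 2*k+3 by ring]
        rw [Odd.neg_pow ⟨k+1, by ring⟩, Even.neg_pow ⟨k+2, by ring⟩]
        ring
      set f := ∏ i ∈ Icc 1 (2*k+2), (1 - (-x)^i) with hf
      set y := x^(2*k+3) with hy
      have hy0 : 0 ≤ y := pow_nonneg hx0 _
      have hyx : y ≤ x := by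
        calc y ≤ x^1 := pow_le_pow_of_le_one hx0 (by linarith) (by omega)
        _ = x := pow_one x
      have h4 : x^(2*k+4) = y * x := by rw [hy, ← pow_succ]
      have h5 : x^(2*(k+1)+3) = y * x^2 := by rw [hy, ← pow_add]; ring_nf
      have hL0 : 0 ≤ 1 - x - x^2 := by nlinarith
      rw [key, h4]
      have h6 : y*x ≤ y/2 := by nlinarith
      have h7 : y*y*x ≤ y/4 := by nlinarith [mul_nonneg hy0 hy0, mul_nonneg (mul_nonneg hy0 hy0) hx0]
      have step : (1:ℝ) ≤ (1+y)*(1-y*x) := by nlinarith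
      constructor
      · nlinarith [mul_le_mul h1 step zero_le_one (hL0.trans h1)]
      · rw [h5]
        nlinarith [mul_nonneg hy0 hx0, mul_nonneg (mul_nonneg hy0 hy0) hx0,
          sq_nonneg x, mul_le_mul_of_nonneg_right h2 (mul_nonneg (by linarith : (0:ℝ) ≤ 1 + y) (by nlinarith : (0:ℝ) ≤ 1 - y*x))]

private lemma auxMain (x : ℝ) (hx0 : 0 ≤ x) (hx : x ≤ 1/2) (m : ℕ) (hm : 2 ≤ m) :
    (1 - x - x^2) ≤ ∏ i ∈ Icc 1 m, (1 - (-x)^i) ∧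
      (∏ i ∈ Icc 1 m, (1 - (-x)^i)) * (1 - x - x^2) ≤ 1 := by
  rcases Nat.even_or_odd m with he | ho
  · obtain ⟨j, hj⟩ := he
    have hj1 : 1 ≤ j := by omega
    obtain ⟨k, hk⟩ := Nat.exists_eq_add_of_le hj1
    have hmk : m = 2*k+2 := by omega
    subst hmk
    obtain ⟨h1, h2⟩ := auxEven x hx0 hx k
    refine ⟨h1, h2.trans ?_⟩
    have : 0 ≤ x^(2*k+3) := pow_nonneg hx0 _
    linarith
  · obtain ⟨j, hj⟩ := ho
    have hj1 : 1 ≤ j := by omega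
    obtain ⟨k, hk⟩ := Nat.exists_eq_add_of_le hj1
    have hmk : m = 2*k+3 := by omega
    subst hmk
    obtain ⟨h1, h2⟩ := auxEven x hx0 hx k
    have key : ∏ i ∈ Icc 1 (2*k+3), (1 - (-x)^i)
        = (∏ i ∈ Icc 1 (2*k+2), (1 - (-x)^i)) * (1 + x^(2*k+3)) := by
      rw [show 2*k+3 = (2*k+2)+1 by ring, Finset.prod_Icc_succ_top (by omega),
        show (2*k+2)+1 = 2*k+3 by ring, Odd.neg_pow ⟨k+1, by ring⟩]
      ring
    set f := ∏ i ∈ Icc 1 (2*k+2), (1 - (-x)^i)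
    set y := x^(2*k+3) with hy
    have hy0 : 0 ≤ y := pow_nonneg hx0 _
    have hyx : y ≤ x := by
      calc y ≤ x^1 := pow_le_pow_of_le_one hx0 (by linarith) (by omega)
      _ = x := pow_one x
    have hL0 : 0 ≤ 1 - x - x^2 := by nlinarith
    rw [key]
    constructor
    · nlinarith
    · nlinarith [mul_le_mul_of_nonneg_right h2 (by linarith : (0:ℝ) ≤ 1 + y)]

theorem stmt_1 (a : ℝ) (m : ℕ) (ha : 2 ≤ a) (hm : 2 ≤ m) :
    a ^ (m * (m + 1) / 2) * (1 - a⁻¹ - (a ^ 2)⁻¹) ≤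
      ∏ i ∈ Finset.Icc 1 m, (a ^ i - (-1 : ℝ) ^ i) ∧
    ∏ i ∈ Finset.Icc 1 m, (a ^ i - (-1 : ℝ) ^ i) ≤
      a ^ (m * (m + 1) / 2) * (1 - a⁻¹ - (a ^ 2)⁻¹)⁻¹ := by
  have ha0 : 0 < a := by linarith
  set x := a⁻¹ with hxdef
  have hx0 : 0 ≤ x := by positivity
  have hx : x ≤ 1/2 := by
    rw [hxdef]
    rw [inv_le_comm₀ (by linarith) (by norm_num)]
    norm_num; linarith
  have hsum : ∑ i ∈ Finset.Icc 1 m, i = m * (m + 1) / 2 := by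
    have h1 : Finset.Icc 1 m = Finset.range (m+1) \ {0} := by
      ext i
      simp only [Finset.mem_Icc, Finset.mem_sdiff, Finset.mem_range, Finset.mem_singleton]
      omega
    have h2 : ∑ i ∈ Finset.range (m+1), i = (m+1) * m / 2 := by
      simpa using Finset.sum_range_id (m+1)
    have h3 : ∑ i ∈ Finset.Icc 1 m, i = ∑ i ∈ Finset.range (m+1), i := by
      refine (Finset.sum_subset (fun i hi => ?_) (fun i hi hni => ?_)).symm.symm
      · simp only [Finset.mem_Icc] at hi; simp only [Finset.mem_range]; omega
      · simp only [Finset.mem_Icc] at hni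
        simp only [Finset.mem_range] at hi
        omega
    rw [h3, h2, Nat.mul_comm]
  have hprod : ∏ i ∈ Finset.Icc 1 m, (a ^ i - (-1 : ℝ) ^ i)
      = a ^ (m * (m + 1) / 2) * ∏ i ∈ Finset.Icc 1 m, (1 - (-x)^i) := by
    rw [← hsum, ← Finset.prod_pow_eq_pow_sum, ← Finset.prod_mul_distrib]
    refine Finset.prod_congr rfl fun i _ => ?_
    have : (-x)^i = (-1)^i * (a^i)⁻¹ := by
      rw [hxdef, neg_pow, inv_pow]
    rw [this]
    have hai : a^i ≠ 0 := by positivity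
    field_simp
  obtain ⟨h1, h2⟩ := auxMain x hx0 hx m hm
  have hLpos : (0:ℝ) < 1 - x - x^2 := by nlinarith
  have hx2 : (a ^ 2)⁻¹ = x^2 := (inv_pow a 2).symm
  have hT : (0:ℝ) ≤ a ^ (m * (m + 1) / 2) := by positivity
  rw [hprod, hx2]
  constructor
  · exact mul_le_mul_of_nonneg_left h1 hT
  · refine mul_le_mul_of_nonneg_left ?_ hT
    rw [← one_div]
    exact (le_div_iff₀ hLpos).mpr h2
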